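/- If K is a critical clique of a graph G of size more than k+1, then G has a 3-leaf power edition of size at most k if and only if the graph obtained by deleting |K| - (k+1) vertices of K has a 3-leaf power edition of size at most k. -/

import Mathlib

open SimpleGraph

/-- `K` is a clique which is a module of `G`. -/
def IsCliqueModule {V : Type*} (G : SimpleGraph V) (K : Set V) : Prop :=
  G.IsClique K ∧ ∀ x ∈ K, ∀ y ∈ K, ∀ z ∉ K, (G.Adj x z ↔ G.Adj y z)

/-- A critical clique of `G`: a maximal clique module. -/
def IsCriticalClique {V : Type*} (G : SimpleGraph V) (K : Set V) : Prop :=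
  K.Nonempty ∧ IsCliqueModule G K ∧ ∀ K', IsCliqueModule G K' → K ⊆ K' → K' = K

/-- The graph `G + F` obtained from `G` by toggling (adding or deleting) the pairs in `F`:
its edge set is the symmetric difference of `E(G)` and `F`. -/
def editGraph {V : Type*} (G : SimpleGraph V) (F : Set (Sym2 V)) : SimpleGraph V where
  Adj u v := u ≠ v ∧ ((G.Adj u v ∧ s(u, v) ∉ F) ∨ (¬ G.Adj u v ∧ s(u, v) ∈ F))
  symm := ⟨by
    intro u v h
    refine ⟨h.1.symm, ?_⟩
    rw [Sym2.eq_swap]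
    rcases h.2 with ⟨h1, h2⟩ | ⟨h1, h2⟩
    · exact Or.inl ⟨h1.symm, h2⟩
    · exact Or.inr ⟨fun hh => h1 hh.symm, h2⟩⟩
  loopless := ⟨fun u h => h.1 rfl⟩

/-- The bull: a triangle `0,1,2` with pendant vertices `3` (on `1`) and `4` (on `2`). -/
def bull : SimpleGraph (Fin 5) :=
  SimpleGraph.fromRel (fun a b => (a, b) ∈ ([(0,1),(0,2),(1,2),(1,3),(2,4)] : List (Fin 5 × Fin 5)))

/-- The dart: a diamond `0,1,2,3` (missing edge `(0,1)`) plus a pendant vertex `4`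
adjacent to the degree-3 vertex `2`. -/
def dart : SimpleGraph (Fin 5) :=
  SimpleGraph.fromRel (fun a b => (a, b) ∈ ([(0,2),(0,3),(1,2),(1,3),(2,3),(2,4)] : List (Fin 5 × Fin 5)))

/-- The gem: a path `0-1-2-3` plus a dominating vertex `4`. -/
def gem : SimpleGraph (Fin 5) :=
  SimpleGraph.fromRel (fun a b => (a, b) ∈ ([(0,1),(1,2),(2,3),(0,4),(1,4),(2,4),(3,4)] : List (Fin 5 × Fin 5)))

/-- A graph is a 3-leaf power iff it is {bull, dart, gem, chordless `C≥4`}-free. -/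
def Is3LeafPower {V : Type*} (H : SimpleGraph V) : Prop :=
  IsEmpty (bull ↪g H) ∧ IsEmpty (dart ↪g H) ∧ IsEmpty (gem ↪g H) ∧
    ∀ n, 4 ≤ n → IsEmpty (SimpleGraph.cycleGraph n ↪g H)

/-- `G` admits a 3-leaf power edition of size at most `k`. -/
def Has3LPEdition {V : Type*} (G : SimpleGraph V) (k : ℕ) : Prop :=
  ∃ F : Finset (Sym2 V), F.card ≤ k ∧ Is3LeafPower (editGraph G ↑F)

section Twins

variable {V : Type*}

/-- `u` is a true twin of `v` in `H`. -/
def TrueTwin (H : SimpleGraph V) (v u : V) : Prop :=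
  H.Adj v u ∧ ∀ z, z ≠ v → z ≠ u → (H.Adj v z ↔ H.Adj u z)

/-- `B` has no pair of true twins. -/
def TwinFree {W : Type*} (B : SimpleGraph W) : Prop := ∀ x y, ¬ TrueTwin B x y

lemma twin_replace {W : Type*} {B : SimpleGraph W} (hB : TwinFree B)
    (H : SimpleGraph V) (S : Set V) (v : V) (hv : v ∈ S)
    (htw : ∀ u ∈ S, u ≠ v → TrueTwin H v u)
    (h : IsEmpty (B ↪g H.induce {x | x ∈ S → x = v})) : IsEmpty (B ↪g H) := by
  classical
  constructor
  intro f
  have adjS : ∀ a ∈ S, ∀ b ∈ S, a ≠ b → H.Adj a b := by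
    intro a ha b hb hab
    rcases eq_or_ne a v with rfl | hav
    · exact (htw b hb (Ne.symm hab)).1
    · rcases eq_or_ne b v with rfl | hbv
      · exact ((htw a ha hav).1).symm
      · exact ((htw a ha hav).2 b hbv (Ne.symm hab)).mp (htw b hb hbv).1
  have twinS : ∀ a ∈ S, ∀ b ∈ S, a ≠ b → ∀ z, z ≠ a → z ≠ b → (H.Adj a z ↔ H.Adj b z) := by
    intro a ha b hb hab z hza hzb
    rcases eq_or_ne z v with rfl | hzv
    · exact ⟨fun _ => (adjS z hv b hb hzb).symm,
        fun _ => (adjS z hv a ha hza).symm⟩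
    · have step : ∀ c ∈ S, c ≠ z → (H.Adj c z ↔ H.Adj v z) := by
        intro c hc hcz
        rcases eq_or_ne c v with rfl | hcv
        · exact Iff.rfl
        · exact ((htw c hc hcv).2 z hzv hcz.symm).symm
      rw [step a ha hza.symm, step b hb hzb.symm]
  have uniq : ∀ i j, f i ∈ S → f j ∈ S → i = j := by
    intro i j hi hj
    by_contra hij
    apply hB i j
    refine ⟨f.map_adj_iff.mp (adjS (f i) hi (f j) hj fun hc => hij (f.injective hc)), ?_⟩
    intro z hzi hzj
    rw [← f.map_adj_iff (v := i) (w := z), ← f.map_adj_iff (v := j) (w := z)]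
    exact twinS (f i) hi (f j) hj (fun hc => hij (f.injective hc)) (f z)
      (fun hc => hzi (f.injective hc)) (fun hc => hzj (f.injective hc))
  -- build the replaced embedding
  have hvT : v ∈ {x | x ∈ S → x = v} := fun _ => rfl
  let g : W → {x // x ∈ {x : V | x ∈ S → x = v}} := fun i =>
    if hfi : f i ∈ S then ⟨v, hvT⟩ else ⟨f i, fun hc => absurd hc hfi⟩
  have hgval : ∀ i, (f i ∈ S ∧ (g i : V) = v) ∨ (f i ∉ S ∧ (g i : V) = f i) := by
    intro i
    by_cases hfi : f i ∈ S
    · exact Or.inl ⟨hfi, by simp [g, hfi]⟩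
    · exact Or.inr ⟨hfi, by simp [g, hfi]⟩
  have hadj : ∀ i j, H.Adj (g i : V) (g j : V) ↔ H.Adj (f i) (f j) := by
    intro i j
    rcases hgval i with ⟨hi, hgi⟩ | ⟨hi, hgi⟩ <;> rcases hgval j with ⟨hj, hgj⟩ | ⟨hj, hgj⟩
    · have : i = j := uniq i j hi hj
      subst this
      rw [hgi]
      simp
    · rw [hgi, hgj]
      rcases eq_or_ne (f i) v with hfi | hfi
      · rw [hfi]
      · have hne : f j ≠ v := fun hc => hj (hc ▸ hv)
        have hne2 : f j ≠ f i := fun hc => hj (hc ▸ hi)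
        exact twinS v hv (f i) hi (Ne.symm hfi) (f j) hne hne2
    · rw [hgi, hgj]
      rcases eq_or_ne (f j) v with hfj | hfj
      · rw [hfj]
      · have hne : f i ≠ v := fun hc => hi (hc ▸ hv)
        have hne2 : f i ≠ f j := fun hc => hi (hc ▸ hj)
        constructor
        · intro ha
          exact ((twinS v hv (f j) hj (Ne.symm hfj) (f i) hne hne2).mp ha.symm).symm
        · intro ha
          exact ((twinS v hv (f j) hj (Ne.symm hfj) (f i) hne hne2).mpr ha.symm).symm
    · rw [hgi, hgj]
  have ginj : Function.Injective g := by
    intro i j hgij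
    have := congrArg (Subtype.val) hgij
    rcases hgval i with ⟨hi, hgi⟩ | ⟨hi, hgi⟩ <;> rcases hgval j with ⟨hj, hgj⟩ | ⟨hj, hgj⟩
    · exact uniq i j hi hj
    · rw [hgi, hgj] at this
      exact absurd (this ▸ hv) hj
    · rw [hgi, hgj] at this
      exact absurd (this ▸ hv) hi
    · rw [hgi, hgj] at this
      exact f.injective this
  have emb : B ↪g H.induce {x | x ∈ S → x = v} :=
    { toFun := g
      inj' := ginj
      map_rel_iff' := by
        intro i j
        simp only [comap_adj, Function.Embedding.coe_subtype]
        rw [show ({ toFun := g, inj' := ginj } : W ↪ _) i = g i from rfl,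
          show ({ toFun := g, inj' := ginj } : W ↪ _) j = g j from rfl, hadj i j]
        exact f.map_adj_iff }
  exact h.false emb

end Twins

section Forbidden

open scoped Fin.NatCast Fin.CommRing

set_option synthInstance.maxSize 512 in
set_option maxHeartbeats 1000000 in
lemma bull_twinFree : TwinFree bull := by
  unfold TwinFree TrueTwin bull
  simp only [fromRel_adj]
  decide

set_option synthInstance.maxSize 512 in
set_option maxHeartbeats 1000000 in
lemma dart_twinFree : TwinFree dart := by
  unfold TwinFree TrueTwin dart
  simp only [fromRel_adj]
  decide

set_option synthInstance.maxSize 512 in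
set_option maxHeartbeats 1000000 in
lemma gem_twinFree : TwinFree gem := by
  unfold TwinFree TrueTwin gem
  simp only [fromRel_adj]
  decide

lemma cycle_twinFree' (m : ℕ) : TwinFree (cycleGraph (m + 4)) := by
  have h1 : ((1:ℕ) : Fin (m+4)) ≠ 0 := by
    rw [Ne, Fin.natCast_eq_zero]
    intro hd
    have := Nat.le_of_dvd (by norm_num) hd
    omega
  have h2 : ((2:ℕ) : Fin (m+4)) ≠ 0 := by
    rw [Ne, Fin.natCast_eq_zero]
    intro hd
    have := Nat.le_of_dvd (by norm_num) hd
    omega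
  have h3 : ((3:ℕ) : Fin (m+4)) ≠ 0 := by
    rw [Ne, Fin.natCast_eq_zero]
    intro hd
    have := Nat.le_of_dvd (by norm_num) hd
    omega
  rintro x y ⟨hadj, htw⟩
  have hadj' : x - y = 1 ∨ y - x = 1 := (cycleGraph_adj (n := m + 2)).mp hadj
  have key : ∀ a b : Fin (m+4), b - a = 1 →
      (∀ z, z ≠ a → z ≠ b → ((cycleGraph (m+4)).Adj a z ↔ (cycleGraph (m+4)).Adj b z)) → False := by
    intro a b hba htw'
    have hb : b = a + 1 := by
      have h := sub_eq_iff_eq_add.mp hba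
      rw [h]; ring
    have e2 : b + 1 - a = ((2:ℕ) : Fin (m+4)) := by rw [hb]; push_cast; ring
    have e1 : b + 1 - b = ((1:ℕ) : Fin (m+4)) := by push_cast; ring
    have hz1 : b + 1 ≠ a := fun h => h2 (by rw [← e2, h]; ring)
    have hz2 : b + 1 ≠ b := fun h => h1 (by rw [← e1, h]; ring)
    have hAdjb : (cycleGraph (m+4)).Adj b (b + 1) := by
      rw [cycleGraph_adj (n := m+2)]
      right
      rw [e1]; push_cast; ring
    have hAdja : ¬ (cycleGraph (m+4)).Adj a (b + 1) := by
      rw [cycleGraph_adj (n := m+2)]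
      push_neg
      constructor
      · intro h
        apply h3
        have : a - (b + 1) + ((3:ℕ) : Fin (m+4)) = 1 + ((3:ℕ):Fin (m+4)) := by rw [h]
        rw [hb] at this
        push_cast at this ⊢
        linear_combination -this
      · intro h
        apply h1
        have : b + 1 - a - ((1:ℕ) : Fin (m+4)) = 1 - ((1:ℕ):Fin (m+4)) := by rw [h]
        rw [hb] at this
        push_cast at this ⊢
        linear_combination this
    exact hAdja ((htw' (b+1) hz1 hz2).mpr hAdjb)
  rcases hadj' with h | h
  · exact key y x h (fun z hzy hzx => (htw z hzx hzy).symm)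
  · exact key x y h htw

lemma cycle_twinFree {n : ℕ} (hn : 4 ≤ n) : TwinFree (cycleGraph n) := by
  obtain ⟨m, rfl⟩ : ∃ m, n = m + 4 := ⟨n - 4, by omega⟩
  exact cycle_twinFree' m

end Forbidden

section LP

variable {V : Type*}

lemma is3LP_induce {H : SimpleGraph V} (h : Is3LeafPower H) (s : Set V) :
    Is3LeafPower (H.induce s) := by
  obtain ⟨hb, hd, hg, hc⟩ := h
  exact ⟨⟨fun f => hb.false ((SimpleGraph.Embedding.induce s).comp f)⟩,
    ⟨fun f => hd.false ((SimpleGraph.Embedding.induce s).comp f)⟩,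
    ⟨fun f => hg.false ((SimpleGraph.Embedding.induce s).comp f)⟩,
    fun n hn => ⟨fun f => (hc n hn).false ((SimpleGraph.Embedding.induce s).comp f)⟩⟩

lemma is3LP_of_twins (H : SimpleGraph V) (S : Set V) (v : V) (hv : v ∈ S)
    (htw : ∀ u ∈ S, u ≠ v → TrueTwin H v u)
    (h : Is3LeafPower (H.induce {x | x ∈ S → x = v})) : Is3LeafPower H := by
  obtain ⟨hb, hd, hg, hc⟩ := h
  exact ⟨twin_replace bull_twinFree H S v hv htw hb,
    twin_replace dart_twinFree H S v hv htw hd,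
    twin_replace gem_twinFree H S v hv htw hg,
    fun n hn => twin_replace (cycle_twinFree hn) H S v hv htw (hc n hn)⟩

end LP


section MainAux

lemma editGraph_adj {V : Type*} (G : SimpleGraph V) (F : Set (Sym2 V)) (u w : V) :
    (editGraph G F).Adj u w ↔
      u ≠ w ∧ ((G.Adj u w ∧ s(u, w) ∉ F) ∨ (¬ G.Adj u w ∧ s(u, w) ∈ F)) := Iff.rfl

lemma induce_adj' {V : Type*} (G : SimpleGraph V) (s : Set V) (a b : s) :
    (G.induce s).Adj a b ↔ G.Adj ↑a ↑b := Iff.rfl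

end MainAux

theorem bigCriticalClique_reduction {V : Type*} [Fintype V] (G : SimpleGraph V) (k : ℕ)
    (K : Set V) (hK : IsCriticalClique G K) (hbig : k + 1 < K.ncard)
    (D : Set V) (hD : D ⊆ K) (hDcard : D.ncard = K.ncard - (k + 1)) :
    Has3LPEdition G k ↔ Has3LPEdition (G.induce Dᶜ) k := by
  classical
  obtain ⟨-, ⟨hclique, hmod⟩, -⟩ := hK
  have hadjK : ∀ a ∈ K, ∀ b ∈ K, a ≠ b → G.Adj a b := fun a ha b hb hne => hclique ha hb hne
  have coe_inj : Function.Injective (fun x : ↥Dᶜ => (x : V)) := Subtype.val_injective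
  have sym2_inj : Function.Injective (Sym2.map (fun x : ↥Dᶜ => (x : V))) :=
    Sym2.map.injective coe_inj
  constructor
  · -- forward: restrict the edition
    rintro ⟨F, hFc, hF3⟩
    refine ⟨F.preimage (Sym2.map (fun x : ↥Dᶜ => (x : V))) sym2_inj.injOn, ?_, ?_⟩
    · exact le_trans (Finset.card_le_card_of_injOn _
        (fun e he => Finset.mem_preimage.mp he) sym2_inj.injOn) hFc
    · have heq : editGraph (G.induce Dᶜ)
          ↑(F.preimage (Sym2.map (fun x : ↥Dᶜ => (x : V))) sym2_inj.injOn)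
          = (editGraph G ↑F).induce Dᶜ := by
        ext a b
        rw [induce_adj', editGraph_adj, editGraph_adj]
        simp only [Finset.coe_preimage, Set.mem_preimage, Sym2.map_pair_eq,
          Finset.mem_coe, ne_eq, Subtype.coe_ne_coe, induce_adj']
      rw [heq]
      exact is3LP_induce hF3 _
  · -- backward
    rintro ⟨F', hF'c, hF'3⟩
    set K'' : Set ↥Dᶜ := {x | (x : V) ∈ K} with hK''def
    have himg : (fun x : ↥Dᶜ => (x : V)) '' K'' = K \ D := by
      ext y
      constructor
      · rintro ⟨x, hx, rfl⟩
        exact ⟨hx, x.2⟩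
      · rintro ⟨hyK, hyD⟩
        exact ⟨⟨y, hyD⟩, hyK, rfl⟩
    have hK''card : K''.ncard = k + 1 := by
      have h1 : ((fun x : ↥Dᶜ => (x : V)) '' K'').ncard = K''.ncard :=
        Set.ncard_image_of_injective _ coe_inj
      rw [himg] at h1
      rw [← h1, Set.ncard_diff hD (Set.toFinite D), hDcard]
      omega
    -- find an untouched vertex v ∈ K''
    have hgoodv : ∃ v, v ∈ K'' ∧ ∀ e ∈ F', v ∈ e → ∀ x ∈ e, (x : V) ∈ K := by
      by_contra hcon
      push_neg at hcon
      choose φ hφ1 hφ2 w hw hwK using hcon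
      have hinj : ∀ a (ha : a ∈ K'') b (hb : b ∈ K''), φ a ha = φ b hb → a = b := by
        intro a ha b hb hab
        by_contra hne
        have hae : a ∈ φ a ha := hφ2 a ha
        have hbe : b ∈ φ a ha := by
          have := hφ2 b hb
          rw [← hab] at this
          exact this
        have hxe : w a ha ∈ φ a ha := hw a ha
        have haK : (a : V) ∈ K := ha
        have hbK : (b : V) ∈ K := hb
        have hxa : w a ha ≠ a := fun hc => hwK a ha (by rw [hc]; exact haK)
        have hxb : w a ha ≠ b := fun hc => hwK a ha (by rw [hc]; exact hbK)
        obtain ⟨p, q, hp⟩ : ∃ p q, φ a ha = s(p, q) := by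
          induction φ a ha using Sym2.ind with
          | _ p q => exact ⟨p, q, rfl⟩
        rw [hp, Sym2.mem_iff] at hae hbe hxe
        rcases hae with rfl | rfl <;> rcases hbe with h1 | h1 <;>
          rcases hxe with h2 | h2 <;> first
          | exact hne h1.symm
          | exact hxa h2
          | exact hxb (h2.trans h1.symm)
          | exact hxb h2
          | exact hxa (h2.trans h1.symm)
      have hle : K''.ncard ≤ (↑F' : Set (Sym2 ↥Dᶜ)).ncard := by
        refine Set.ncard_le_ncard_of_injOn (fun a => if ha : a ∈ K'' then φ a ha else s(a, a))
          ?_ ?_ (Set.toFinite _)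
        · intro a ha
          simp only [ha, dif_pos]
          exact hφ1 a ha
        · intro a ha b hb hfab
          simp only [ha, hb, dif_pos] at hfab
          exact hinj a ha b hb hfab
      rw [Set.ncard_coe_finset, hK''card] at hle
      omega
    obtain ⟨v, hvK, hvgood⟩ := hgoodv
    -- the cleaned edition
    set F'' : Finset (Sym2 ↥Dᶜ) := F'.filter (fun e => ∀ x ∈ e, (x : V) ∉ K) with hF''def
    have hF''sub : F'' ⊆ F' := Finset.filter_subset _ _
    have hF''K : ∀ e ∈ F'', ∀ x ∈ e, (x : V) ∉ K := by
      intro e he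
      exact (Finset.mem_filter.mp he).2
    have hF''notmem : ∀ p q : ↥Dᶜ, (p : V) ∈ K → s(p, q) ∉ F'' := by
      intro p q hp hmem
      exact hF''K _ hmem p (Sym2.mem_mk_left p q) hp
    have hF''notmem' : ∀ p q : ↥Dᶜ, (q : V) ∈ K → s(p, q) ∉ F'' := by
      intro p q hq hmem
      exact hF''K _ hmem q (Sym2.mem_mk_right p q) hq
    -- K'' vertices are twins of v in the cleaned edited graph
    have htwin'' : ∀ x : ↥Dᶜ, (x : V) ∈ K → x ≠ v →
        TrueTwin (editGraph (G.induce Dᶜ) ↑F'') v x := by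
      intro x hxK hxv
      constructor
      · rw [editGraph_adj]
        refine ⟨(Ne.symm hxv), Or.inl ⟨?_, ?_⟩⟩
        · rw [induce_adj']
          exact hadjK _ hvK _ hxK (Subtype.coe_ne_coe.mpr (Ne.symm hxv))
        · intro hc
          exact hF''notmem v x hvK (Finset.mem_coe.mp hc)
      · intro z hzv hzx
        have h1 : s(v, z) ∉ F'' := hF''notmem v z hvK
        have h2 : s(x, z) ∉ F'' := hF''notmem x z hxK
        have hadjiff : (G.induce Dᶜ).Adj v z ↔ (G.induce Dᶜ).Adj x z := by
          rw [induce_adj', induce_adj']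
          by_cases hzK : (z : V) ∈ K
          · constructor
            · intro _
              exact hadjK _ hxK _ hzK (Subtype.coe_ne_coe.mpr (Ne.symm hzx))
            · intro _
              exact hadjK _ hvK _ hzK (Subtype.coe_ne_coe.mpr (Ne.symm hzv))
          · exact hmod (↑v) hvK (↑x) hxK (↑z) hzK
        rw [editGraph_adj, editGraph_adj]
        constructor
        · rintro ⟨-, h | h⟩
          · exact ⟨Ne.symm hzx, Or.inl ⟨hadjiff.mp h.1,
              fun hc => h2 (Finset.mem_coe.mp hc)⟩⟩
          · exact absurd (Finset.mem_coe.mp h.2) h1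
        · rintro ⟨-, h | h⟩
          · exact ⟨Ne.symm hzv, Or.inl ⟨hadjiff.mpr h.1,
              fun hc => h1 (Finset.mem_coe.mp hc)⟩⟩
          · exact absurd (Finset.mem_coe.mp h.2) h2
    -- the cleaned edited graph agrees with the given one away from K'' (except v)
    have heq2 : (editGraph (G.induce Dᶜ) ↑F'').induce {x : ↥Dᶜ | x ∈ K'' → x = v}
        = (editGraph (G.induce Dᶜ) ↑F').induce {x : ↥Dᶜ | x ∈ K'' → x = v} := by
      ext a b
      rw [induce_adj', induce_adj', editGraph_adj, editGraph_adj]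
      by_cases hab : (a : ↥Dᶜ) = (b : ↥Dᶜ)
      · simp [hab]
      · have hmemiff : s((a : ↥Dᶜ), (b : ↥Dᶜ)) ∈ F'' ↔ s((a : ↥Dᶜ), (b : ↥Dᶜ)) ∈ F' := by
          constructor
          · exact fun h => hF''sub h
          · intro h
            rw [hF''def, Finset.mem_filter]
            refine ⟨h, ?_⟩
            intro y hy hyK
            have hyv : y = v := by
              rw [Sym2.mem_iff] at hy
              rcases hy with rfl | rfl
              · exact a.2 hyK
              · exact b.2 hyK
            subst hyv
            have hall := hvgood _ h hy
            have haK : ((a : ↥Dᶜ) : V) ∈ K := hall _ (Sym2.mem_mk_left _ _)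
            have hbK : ((b : ↥Dᶜ) : V) ∈ K := hall _ (Sym2.mem_mk_right _ _)
            exact hab ((a.2 haK).trans (b.2 hbK).symm)
        rw [show (s((a : ↥Dᶜ), (b : ↥Dᶜ)) ∈ (↑F'' : Set (Sym2 ↥Dᶜ))) = (s((a : ↥Dᶜ), (b : ↥Dᶜ)) ∈ F'') from rfl]
        rw [show (s((a : ↥Dᶜ), (b : ↥Dᶜ)) ∈ (↑F' : Set (Sym2 ↥Dᶜ))) = (s((a : ↥Dᶜ), (b : ↥Dᶜ)) ∈ F') from rfl]
        rw [hmemiff]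
    have h3LP'' : Is3LeafPower (editGraph (G.induce Dᶜ) ↑F'') := by
      refine is3LP_of_twins _ K'' v hvK (fun u hu hne => htwin'' u hu hne) ?_
      rw [heq2]
      exact is3LP_induce hF'3 _
    -- lift the cleaned edition to V
    set F : Finset (Sym2 V) := F''.map ⟨Sym2.map (fun x : ↥Dᶜ => (x : V)), sym2_inj⟩ with hFdef
    have hFmem : ∀ e ∈ F, ∀ y ∈ e, y ∉ D ∧ y ∉ K := by
      intro e he
      rw [hFdef, Finset.mem_map] at he
      obtain ⟨e', he', rfl⟩ := he
      induction e' using Sym2.ind with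
      | _ p q =>
        intro y hy
        rw [Function.Embedding.coeFn_mk, Sym2.map_pair_eq, Sym2.mem_iff] at hy
        rcases hy with rfl | rfl
        · exact ⟨p.2, hF''K _ he' p (Sym2.mem_mk_left p q)⟩
        · exact ⟨q.2, hF''K _ he' q (Sym2.mem_mk_right p q)⟩
    have hFnot : ∀ y w : V, (y ∈ D ∨ y ∈ K) → s(y, w) ∉ (↑F : Set (Sym2 V)) := by
      intro y w hy hmem
      have := hFmem _ (Finset.mem_coe.mp hmem) y (Sym2.mem_mk_left y w)
      tauto
    have hFnot' : ∀ y w : V, (w ∈ D ∨ w ∈ K) → s(y, w) ∉ (↑F : Set (Sym2 V)) := by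
      intro y w hw hmem
      have := hFmem _ (Finset.mem_coe.mp hmem) w (Sym2.mem_mk_right y w)
      tauto
    refine ⟨F, ?_, ?_⟩
    · rw [hFdef, Finset.card_map]
      exact le_trans (Finset.card_le_card hF''sub) hF'c
    -- the lifted edited graph restricted to Dᶜ is the cleaned edited graph
    have heq3 : (editGraph G ↑F).induce Dᶜ = editGraph (G.induce Dᶜ) ↑F'' := by
      ext a b
      rw [induce_adj', editGraph_adj, editGraph_adj]
      have hmm : s((a : V), (b : V)) ∈ F ↔ s(a, b) ∈ F'' := by
        constructor
        · intro h
          rw [hFdef, Finset.mem_map] at h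
          obtain ⟨e', he', hmape⟩ := h
          have : e' = s(a, b) := by
            apply sym2_inj
            rw [show Sym2.map (fun x : ↥Dᶜ => (x : V)) e'
              = (⟨Sym2.map (fun x : ↥Dᶜ => (x : V)), sym2_inj⟩ : Sym2 ↥Dᶜ ↪ Sym2 V) e' from rfl, hmape]
            rw [Sym2.map_pair_eq]
          rwa [this] at he'
        · intro h
          rw [hFdef]
          have := Finset.mem_map_of_mem ⟨Sym2.map (fun x : ↥Dᶜ => (x : V)), sym2_inj⟩ h
          rwa [show (⟨Sym2.map (fun x : ↥Dᶜ => (x : V)), sym2_inj⟩ : Sym2 ↥Dᶜ ↪ Sym2 V) s(a, b)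
            = s((a : V), (b : V)) from Sym2.map_pair_eq _ _ _] at this
      simp only [induce_adj', ne_eq, Subtype.coe_ne_coe, Finset.mem_coe, hmm]
    -- the deleted vertices are twins of v in the lifted edited graph
    have htwD : ∀ u ∈ D ∪ {(v : V)}, u ≠ (v : V) → TrueTwin (editGraph G ↑F) (v : V) u := by
      intro u hu hne
      have huD : u ∈ D := by
        rcases hu with h | h
        · exact h
        · exact absurd h hne
      have hvD : (v : V) ∉ D := v.2
      have hvu : (v : V) ≠ u := fun hc => hvD (hc ▸ huD)
      constructor
      · rw [editGraph_adj]
        exact ⟨hvu, Or.inl ⟨hadjK _ hvK _ (hD huD) hvu, hFnot' _ _ (Or.inl huD)⟩⟩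
      · intro z hzv hzu
        have h1 : s((v : V), z) ∉ (↑F : Set (Sym2 V)) := hFnot _ _ (Or.inr hvK)
        have h2 : s(u, z) ∉ (↑F : Set (Sym2 V)) := hFnot _ _ (Or.inl huD)
        have hadjiff : G.Adj (v : V) z ↔ G.Adj u z := by
          by_cases hzK : z ∈ K
          · constructor
            · intro _
              exact hadjK _ (hD huD) _ hzK (Ne.symm hzu)
            · intro _
              exact hadjK _ hvK _ hzK (Ne.symm hzv)
          · exact hmod (v : V) hvK u (hD huD) z hzK
        rw [editGraph_adj, editGraph_adj]
        constructor
        · rintro ⟨-, h | h⟩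
          · exact ⟨Ne.symm hzu, Or.inl ⟨hadjiff.mp h.1, h2⟩⟩
          · exact absurd h.2 h1
        · rintro ⟨-, h | h⟩
          · exact ⟨Ne.symm hzv, Or.inl ⟨hadjiff.mpr h.1, h1⟩⟩
          · exact absurd h.2 h2
    refine is3LP_of_twins _ (D ∪ {(v : V)}) (v : V) (Or.inr rfl) htwD ?_
    have hsetT : {x : V | x ∈ D ∪ {(v : V)} → x = (v : V)} = Dᶜ := by
      ext x
      constructor
      · intro hx hxD
        have := hx (Or.inl hxD)
        exact v.2 (this ▸ hxD)
      · intro hx hmem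
        rcases hmem with h | h
        · exact absurd h hx
        · exact h
    rw [hsetT, heq3]
    exact h3LP''
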